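/- arXiv:2001.00477 — 3 statements merged into one kernel-verified Lean document; each statement's English description precedes it below -/
import Mathlib

section
/- Every finite connected chordal graph has cop number 1. -/
open SimpleGraph

variable {V : Type*}

/-- The closed neighborhood `N[v]` of a vertex. -/
def closedNbhd (G : SimpleGraph V) (v : V) : Set V := insert v (G.neighborSet v)

/-- A legal move in the game: stay put or move along an edge. -/
def Step (G : SimpleGraph V) (u w : V) : Prop := u = w ∨ G.Adj u w

/-- A strategy for `k` cops: initial placement, and a move function (cops see all positions),
each cop staying or moving along an edge. -/
structure CopStrategy (G : SimpleGraph V) (k : ℕ) where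
  init : Fin k → V
  move : (Fin k → V) → V → (Fin k → V)
  move_valid : ∀ c r i, Step G (c i) (move c r i)

/-- A strategy for the robber: initial placement after seeing the cops, and a move
function (after seeing the cops' new positions), staying or moving along an edge. -/
structure RobberStrategy (G : SimpleGraph V) (k : ℕ) where
  init : (Fin k → V) → V
  move : (Fin k → V) → V → V
  move_valid : ∀ c r, Step G r (move c r)

/-- The state of the play after `n` full rounds: cops' positions and robber's position.
In each round the cops move first, then the robber moves. -/
def play {G : SimpleGraph V} {k : ℕ} (S : CopStrategy G k) (R : RobberStrategy G k) :
    ℕ → (Fin k → V) × V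
  | 0 => (S.init, R.init S.init)
  | n + 1 =>
    let p := play S R n
    let c' := S.move p.1 p.2
    (c', R.move c' p.2)

/-- The cops win with strategy `S` if against every robber strategy, at some cop move a cop
lands on the robber's current vertex. -/
def CopsWin {G : SimpleGraph V} {k : ℕ} (S : CopStrategy G k) : Prop :=
  ∀ R : RobberStrategy G k, ∃ n i,
    S.move (play S R n).1 (play S R n).2 i = (play S R n).2

/-- The cops capture the robber within `m` cop moves. -/
def CapturesWithin {G : SimpleGraph V} {k : ℕ} (S : CopStrategy G k) (m : ℕ) : Prop :=
  ∀ R : RobberStrategy G k, ∃ n, n + 1 ≤ m ∧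
    ∃ i, S.move (play S R n).1 (play S R n).2 i = (play S R n).2

/-- The cop number of `G`: the least `k` such that `k` cops have a winning strategy. -/
noncomputable def copNumber (G : SimpleGraph V) : ℕ :=
  sInf {k | ∃ S : CopStrategy G k, CopsWin S}

/-- A set `U` is Dilworth if for all distinct `u v ∈ U`, `N(u) \ N[v] ≠ ∅` and
`N(v) \ N[u] ≠ ∅`. -/
def IsDilworthSet (G : SimpleGraph V) (U : Finset V) : Prop :=
  ∀ u ∈ U, ∀ v ∈ U, u ≠ v →
    (G.neighborSet u \ closedNbhd G v).Nonempty ∧ (G.neighborSet v \ closedNbhd G u).Nonempty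

/-- The Dilworth number of `G`: the largest size of a Dilworth set. -/
noncomputable def dilworthNumber (G : SimpleGraph V) : ℕ :=
  sSup {n | ∃ U : Finset V, IsDilworthSet G U ∧ U.card = n}

/-- `zval G v`: the maximum number of vertices of an induced path of `G` with endpoint `v`. -/
noncomputable def zval (G : SimpleGraph V) (v : V) : ℕ :=
  sSup {n | ∃ f : pathGraph n ↪g G, ∃ h : 0 < n, f ⟨0, h⟩ = v}

/-- `zNum G = min over v of zval G v`. -/
noncomputable def zNum (G : SimpleGraph V) : ℕ :=
  sInf {n | ∃ v : V, zval G v = n}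

/-! ### Auxiliary development for the proof -/

section Aux

lemma step_refl (G : SimpleGraph V) (w : V) : Step G w w := Or.inl rfl

lemma Step.symm' {G : SimpleGraph V} {a b : V} (h : Step G a b) : Step G b a :=
  h.elim (fun e => Or.inl e.symm) (fun e => Or.inr e.symm)

/-- Cop positions against an arbitrary robber trajectory `r`. -/
def copSeq {G : SimpleGraph V} {k : ℕ} (S : CopStrategy G k) (r : ℕ → V) : ℕ → Fin k → V
  | 0 => S.init
  | n + 1 => S.move (copSeq S r n) (r n)

/-- `S` catches every valid robber trajectory (robber as an arbitrary walk). -/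
def Catches {G : SimpleGraph V} (S : CopStrategy G 1) : Prop :=
  ∀ r : ℕ → V, (∀ n, Step G (r n) (r (n + 1))) → ∃ n, copSeq S r (n + 1) 0 = r n

lemma copsWin_of_catches {G : SimpleGraph V} {S : CopStrategy G 1} (h : Catches S) :
    CopsWin S := by
  intro R
  set r : ℕ → V := fun n => (play S R n).2 with hr
  have hplay : ∀ n, (play S R n).1 = copSeq S r n := by
    intro n
    induction n with
    | zero => rfl
    | succ n ih =>
      show S.move (play S R n).1 (play S R n).2 = S.move (copSeq S r n) (r n)
      rw [ih]
  have hvalid : ∀ n, Step G (r n) (r (n + 1)) := by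
    intro n
    show Step G (play S R n).2 (R.move _ (play S R n).2)
    exact R.move_valid _ _
  obtain ⟨n, hn⟩ := h r hvalid
  refine ⟨n, 0, ?_⟩
  rw [hplay n]
  exact hn

/-- From a combinatorial induced cycle one gets a `cycleGraph` embedding, contradicting
chordality. -/
lemma not_induced_cycle (G : SimpleGraph V)
    (hch : ∀ n, 4 ≤ n → IsEmpty (cycleGraph n ↪g G))
    {n : ℕ} (hm : 4 ≤ n + 2) (c : Fin (n + 2) → V) (hinj : Function.Injective c)
    (h1 : ∀ j : Fin (n + 2), G.Adj (c j) (c (j + 1)))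
    (h2 : ∀ a b : Fin (n + 2), G.Adj (c a) (c b) → b = a + 1 ∨ a = b + 1) : False := by
  refine (hch (n + 2) hm).false ⟨⟨c, hinj⟩, ?_⟩
  intro a b
  simp only [Function.Embedding.coeFn_mk, cycleGraph_adj]
  constructor
  · intro hA
    rcases h2 a b hA with h | h
    · right; rw [h]; abel
    · left; rw [h]; abel
  · rintro (h | h)
    · have hab : a = b + 1 := by rw [← h]; abel
      rw [hab]; exact (h1 b).symm
    · have hab : b = a + 1 := by rw [← h]; abel
      rw [hab]; exact h1 a

/-- In a connected chordal graph with at least two vertices, some vertex is dominated by a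
neighbor: the first vertex of a longest induced path is dominated by the second. -/
lemma exists_dominated [Fintype V] [Nontrivial V] (G : SimpleGraph V) (hconn : G.Connected)
    (hch : ∀ n, 4 ≤ n → IsEmpty (cycleGraph n ↪g G)) :
    ∃ u v : V, v ≠ u ∧ ∀ w, Step G v w → Step G u w := by
  classical
  obtain ⟨a, b, hne⟩ := exists_pair_ne V
  obtain ⟨c0, hac⟩ : ∃ c, G.Adj a c := by
    obtain ⟨w⟩ := hconn a b
    cases w with
    | nil => exact absurd rfl hne
    | cons h _ => exact ⟨_, h⟩
  set T : Set ℕ := {k | ∃ p : ℕ → V,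
    (∀ i j, i < j → j < k → p i ≠ p j) ∧
    (∀ i, i + 1 < k → G.Adj (p i) (p (i + 1))) ∧
    (∀ i j, i + 2 ≤ j → j < k → ¬G.Adj (p i) (p j))} with hT
  have h2T : 2 ∈ T := by
    refine ⟨fun i => if i = 0 then a else c0, ?_, ?_, ?_⟩
    · intro i j hij hj
      have : i = 0 ∧ j = 1 := by omega
      obtain ⟨rfl, rfl⟩ := this
      simpa using hac.ne
    · intro i hi
      have : i = 0 := by omega
      subst this
      simpa using hac
    · intro i j hij hj
      omega
  have hbdd : ∀ k ∈ T, k ≤ Fintype.card V := by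
    rintro k ⟨p, hd, -, -⟩
    have hinj : Function.Injective (fun i : Fin k => p i) := by
      intro i j hij
      by_contra hne'
      have hij' : (i : ℕ) ≠ (j : ℕ) := fun h => hne' (Fin.ext h)
      rcases lt_or_gt_of_ne hij' with h | h
      · exact hd _ _ h j.isLt hij
      · exact hd _ _ h i.isLt hij.symm
    calc k = Fintype.card (Fin k) := (Fintype.card_fin k).symm
      _ ≤ Fintype.card V := Fintype.card_le_of_injective _ hinj
  have hTne : T.Nonempty := ⟨2, h2T⟩
  have hbdd' : BddAbove T := ⟨Fintype.card V, fun k hk => hbdd k hk⟩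
  have hkT : sSup T ∈ T := Nat.sSup_mem hTne hbdd'
  set k := sSup T with hk
  have hk2 : 2 ≤ k := le_csSup hbdd' h2T
  have hk1 : k + 1 ∉ T := fun h => by
    have := le_csSup hbdd' h
    omega
  obtain ⟨p, hd, hadj, hnadj⟩ := hkT
  refine ⟨p 1, p 0, (hadj 0 (by omega)).ne, ?_⟩
  rintro w hw
  rcases hw with rfl | hw
  · exact Or.inr (hadj 0 (by omega)).symm
  by_cases hw1 : w = p 1
  · exact Or.inl hw1.symm
  by_cases hwadj : G.Adj (p 1) w
  · exact Or.inr hwadj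
  exfalso
  have hwne : ∀ m, m < k → w ≠ p m := by
    intro m hm heq
    rcases Nat.lt_or_ge m 2 with h | h
    · interval_cases m
      · exact G.loopless.irrefl _ (heq ▸ hw)
      · exact hw1 heq
    · exact hnadj 0 m h hm (heq ▸ hw)
  by_cases hex : ∃ i, 2 ≤ i ∧ i < k ∧ G.Adj w (p i)
  · -- build an induced cycle of length ≥ 4, contradicting chordality
    have hexw : ∃ i, 2 ≤ i ∧ i < k ∧ G.Adj w (p i) := hex
    set i := Nat.find hexw with hidef
    obtain ⟨hi2, hik, hiadj⟩ := Nat.find_spec hexw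
    have hmin : ∀ m, m < i → ¬(2 ≤ m ∧ m < k ∧ G.Adj w (p m)) :=
      fun m hm => Nat.find_min hexw hm
    have hwm : ∀ m, 1 ≤ m → m < i → ¬G.Adj w (p m) := by
      intro m hm1 hmi hA
      rcases Nat.lt_or_ge m 2 with h | h
      · have : m = 1 := by omega
        subst this
        exact hwadj hA.symm
      · exact hmin m hmi ⟨h, by omega, hA⟩
    have hval : ∀ x : Fin (i + 2), ((x + 1 : Fin (i + 2))).val = (x.val + 1) % (i + 2) := by
      intro x
      simp [Fin.add_def]
    set c : Fin (i + 2) → V := fun j => if j.val = 0 then w else p (j.val - 1) with hc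
    have hcval0 : ∀ j : Fin (i + 2), j.val = 0 → c j = w := by
      intro j hj; exact if_pos hj
    have hcvalp : ∀ j : Fin (i + 2), j.val ≠ 0 → c j = p (j.val - 1) := by
      intro j hj; exact if_neg hj
    have hcinj : Function.Injective c := by
      intro x y hxy
      simp only [hc] at hxy
      split_ifs at hxy with hx0 hy0 hy0
      · exact Fin.ext (by omega)
      · exact absurd hxy (hwne (y.val - 1) (by have := y.isLt; omega))
      · exact absurd hxy.symm (hwne (x.val - 1) (by have := x.isLt; omega))
      · by_contra hne'
        have hvne : x.val - 1 ≠ y.val - 1 := by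
          intro h
          exact hne' (Fin.ext (by omega))
        have hxlt := x.isLt
        have hylt := y.isLt
        rcases lt_or_gt_of_ne hvne with h | h
        · exact hd _ _ h (by omega) hxy
        · exact hd _ _ h (by omega) hxy.symm
    have h1 : ∀ j : Fin (i + 2), G.Adj (c j) (c (j + 1)) := by
      intro j
      have hj := j.isLt
      rcases Nat.lt_or_ge j.val (i + 1) with h | h
      · have hb : ((j + 1 : Fin (i + 2))).val = j.val + 1 := by
          rw [hval]
          exact Nat.mod_eq_of_lt (by omega)
        rcases Nat.eq_zero_or_pos j.val with h0 | h0
        · rw [hcval0 j h0, hcvalp (j + 1) (by omega)]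
          rw [hb]
          have : j.val + 1 - 1 = 0 := by omega
          rw [this]
          exact hw.symm
        · rw [hcvalp j (by omega), hcvalp (j + 1) (by omega)]
          rw [hb]
          have h' := hadj (j.val - 1) (by omega)
          have e1 : j.val - 1 + 1 = j.val := by omega
          have e2 : j.val + 1 - 1 = j.val := by omega
          rw [e1] at h'
          rw [e2]
          exact h'
      · have hjv : j.val = i + 1 := by omega
        have hb : ((j + 1 : Fin (i + 2))).val = 0 := by
          rw [hval, hjv]
          simp
        rw [hcvalp j (by omega), hcval0 (j + 1) hb, hjv]
        have : i + 1 - 1 = i := by omega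
        rw [this]
        exact hiadj.symm
    have h2 : ∀ x y : Fin (i + 2), G.Adj (c x) (c y) → y = x + 1 ∨ x = y + 1 := by
      have key : ∀ x y : Fin (i + 2), x.val = 0 → G.Adj (c x) (c y) → y = x + 1 ∨ x = y + 1 := by
        intro x y hx0 hA
        have hylt := y.isLt
        rcases Nat.eq_zero_or_pos y.val with hy0 | hy0
        · rw [hcval0 x hx0, hcval0 y hy0] at hA
          exact absurd hA (G.loopless.irrefl _)
        · rw [hcval0 x hx0, hcvalp y (by omega)] at hA
          have hcase : y.val - 1 = 0 ∨ y.val - 1 = i := by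
            by_contra hcon
            push_neg at hcon
            rcases Nat.lt_or_ge (y.val - 1) i with h | h
            · exact hwm (y.val - 1) (by omega) h hA
            · omega
          rcases hcase with h | h
          · left
            apply Fin.ext
            rw [hval]
            have : (x.val + 1) % (i + 2) = 1 := by
              rw [hx0]
              exact Nat.mod_eq_of_lt (by omega)
            omega
          · right
            apply Fin.ext
            rw [hval]
            have hyv : y.val = i + 1 := by omega
            rw [hyv, hx0]
            simp
      intro x y hA
      rcases Nat.eq_zero_or_pos x.val with hx0 | hx0
      · exact key x y hx0 hA
      rcases Nat.eq_zero_or_pos y.val with hy0 | hy0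
      · rcases key y x hy0 hA.symm with h | h
        · exact Or.inr h
        · exact Or.inl h
      · have hxlt := x.isLt
        have hylt := y.isLt
        rw [hcvalp x (by omega), hcvalp y (by omega)] at hA
        rcases Nat.lt_trichotomy (x.val - 1) (y.val - 1) with h | h | h
        · have hle : y.val - 1 ≤ x.val - 1 + 1 := by
            by_contra hcon
            exact hnadj (x.val - 1) (y.val - 1) (by omega) (by omega) hA
          left
          apply Fin.ext
          rw [hval]
          have : (x.val + 1) % (i + 2) = x.val + 1 := Nat.mod_eq_of_lt (by omega)
          omega
        · rw [show x.val - 1 = y.val - 1 from h] at hA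
          exact absurd hA (G.loopless.irrefl _)
        · have hle : x.val - 1 ≤ y.val - 1 + 1 := by
            by_contra hcon
            exact hnadj (y.val - 1) (x.val - 1) (by omega) (by omega) hA.symm
          right
          apply Fin.ext
          rw [hval]
          have : (y.val + 1) % (i + 2) = y.val + 1 := Nat.mod_eq_of_lt (by omega)
          omega
    exact not_induced_cycle G hch (by omega) c hcinj h1 h2
  · -- extend the path by `w`, contradicting maximality
    push_neg at hex
    apply hk1
    refine ⟨fun n => if n = 0 then w else p (n - 1), ?_, ?_, ?_⟩
    · intro i j hij hj
      by_cases hi0 : i = 0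
      · subst hi0
        simp only [if_pos rfl, if_neg (by omega : ¬(j = 0))]
        exact hwne (j - 1) (by omega)
      · simp only [if_neg hi0, if_neg (by omega : ¬(j = 0))]
        exact hd _ _ (by omega) (by omega)
    · intro n hn
      by_cases hn0 : n = 0
      · subst hn0
        simp only [if_pos rfl, if_neg (by omega : ¬(0 + 1 = 0))]
        have : 0 + 1 - 1 = 0 := by omega
        rw [this]
        exact hw.symm
      · simp only [if_neg hn0, if_neg (by omega : ¬(n + 1 = 0))]
        have h' := hadj (n - 1) (by omega)
        have e1 : n - 1 + 1 = n := by omega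
        have e2 : n + 1 - 1 = n := by omega
        rw [e1] at h'
        rw [e2]
        exact h'
    · intro i j hij hj
      by_cases hi0 : i = 0
      · subst hi0
        simp only [if_pos rfl, if_neg (by omega : ¬(j = 0))]
        intro hA
        rcases Nat.lt_or_ge (j - 1) 2 with h | h
        · have : j - 1 = 1 := by omega
          rw [this] at hA
          exact hwadj hA.symm
        · exact hex (j - 1) h (by omega) hA
      · simp only [if_neg hi0, if_neg (by omega : ¬(j = 0))]
        exact hnadj _ _ (by omega) (by omega)

open Classical in
/-- Projection onto the subgraph obtained by deleting a dominated vertex `v`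
(dominated by `u`): `v` is sent to `u`. -/
noncomputable def piMap (G : SimpleGraph V) (v u : V) (huv : u ≠ v) (w : V) : ({v}ᶜ : Set V) :=
  if h : w = v then ⟨u, by simpa using huv⟩ else ⟨w, by simpa using h⟩

lemma piMap_eq_of_eq {G : SimpleGraph V} {v u : V} (huv : u ≠ v) {w : V} (h : w = v) :
    piMap G v u huv w = ⟨u, by simpa using huv⟩ := dif_pos h

lemma piMap_eq_of_ne {G : SimpleGraph V} {v u : V} (huv : u ≠ v) {w : V} (h : w ≠ v) :
    piMap G v u huv w = ⟨w, by simpa using h⟩ := dif_neg h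

lemma piMap_coe {G : SimpleGraph V} {v u : V} (huv : u ≠ v) (x : ({v}ᶜ : Set V)) :
    piMap G v u huv ↑x = x := by
  have hx : (x : V) ≠ v := x.2
  rw [piMap_eq_of_ne huv hx]

lemma induce_step {G : SimpleGraph V} {s : Set V} {x y : ↥s} (h : G.Adj ↑x ↑y) :
    Step (G.induce s) x y := Or.inr h

lemma step_piMap {G : SimpleGraph V} {v u : V} (huv : u ≠ v)
    (hdom : ∀ w, Step G v w → Step G u w) {a b : V} (h : Step G a b) :
    Step (G.induce {v}ᶜ) (piMap G v u huv a) (piMap G v u huv b) := by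
  rcases h with rfl | hab
  · exact Or.inl rfl
  by_cases ha : a = v
  · by_cases hb : b = v
    · rw [ha, hb] at hab
      exact absurd hab (G.loopless.irrefl v)
    · rw [ha] at hab
      rcases hdom b (Or.inr hab) with h | h
      · refine Or.inl ?_
        rw [piMap_eq_of_eq huv ha, piMap_eq_of_ne huv hb]
        exact Subtype.ext h
      · rw [piMap_eq_of_eq huv ha, piMap_eq_of_ne huv hb]
        exact induce_step h
  · by_cases hb : b = v
    · rw [hb] at hab
      rcases hdom a (Or.inr hab.symm) with h | h
      · refine Or.inl ?_
        rw [piMap_eq_of_ne huv ha, piMap_eq_of_eq huv hb]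
        exact Subtype.ext h.symm
      · rw [piMap_eq_of_ne huv ha, piMap_eq_of_eq huv hb]
        exact induce_step h.symm
    · rw [piMap_eq_of_ne huv ha, piMap_eq_of_ne huv hb]
      exact induce_step hab

lemma reachable_piMap {G : SimpleGraph V} {v u : V} (huv : u ≠ v)
    (hdom : ∀ w, Step G v w → Step G u w) {a b : V} (h : G.Reachable a b) :
    (G.induce {v}ᶜ).Reachable (piMap G v u huv a) (piMap G v u huv b) := by
  obtain ⟨w⟩ := h
  induction w with
  | nil => exact Reachable.refl _
  | cons hadj p ih =>
    rcases step_piMap huv hdom (Or.inr hadj) with heq | hA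
    · rw [heq]; exact ih
    · exact (hA.reachable).trans ih

open Classical in
/-- Lift of a 1-cop strategy on `G - v` to `G`, where `v` is dominated by `u`. -/
noncomputable def liftStrategy (G : SimpleGraph V) (v u : V) (huv : u ≠ v)
    (S' : CopStrategy (G.induce {v}ᶜ) 1) : CopStrategy G 1 where
  init := fun _ => ↑(S'.init 0)
  move := fun c r =>
    if Step G (c 0) r then fun _ => r
    else if c 0 = v then c
    else fun _ => ↑(S'.move (fun _ => piMap G v u huv (c 0)) (piMap G v u huv r) 0)
  move_valid := by
    intro c r i
    have hi : i = 0 := Subsingleton.elim i 0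
    subst hi
    by_cases h1 : Step G (c 0) r
    · rw [if_pos h1]; exact h1
    rw [if_neg h1]
    by_cases h2 : c 0 = v
    · rw [if_pos h2]; exact Or.inl rfl
    rw [if_neg h2]
    have hv := S'.move_valid (fun _ => piMap G v u huv (c 0)) (piMap G v u huv r) 0
    have hval : (↑(piMap G v u huv (c 0)) : V) = c 0 := by
      rw [piMap_eq_of_ne huv h2]
    rcases hv with heq | hA
    · refine Or.inl ?_
      have h' := congrArg Subtype.val heq
      rw [hval] at h'
      exact h'
    · refine Or.inr ?_
      have h' : G.Adj (↑(piMap G v u huv (c 0)))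
          (↑(S'.move (fun _ => piMap G v u huv (c 0)) (piMap G v u huv r) 0)) := hA
      rw [hval] at h'
      exact h'

open Classical in
lemma liftStrategy_move {G : SimpleGraph V} {v u : V} (huv : u ≠ v)
    (S' : CopStrategy (G.induce {v}ᶜ) 1) (c : Fin 1 → V) (r : V) :
    (liftStrategy G v u huv S').move c r =
      if Step G (c 0) r then fun _ => r
      else if c 0 = v then c
      else fun _ => ↑(S'.move (fun _ => piMap G v u huv (c 0)) (piMap G v u huv r) 0) := rfl

lemma liftStrategy_init {G : SimpleGraph V} {v u : V} (huv : u ≠ v)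
    (S' : CopStrategy (G.induce {v}ᶜ) 1) :
    (liftStrategy G v u huv S').init = fun _ => ↑(S'.init 0) := rfl

lemma liftStrategy_catches {G : SimpleGraph V} {v u : V} (huv : u ≠ v)
    (hdom : ∀ w, Step G v w → Step G u w)
    {S' : CopStrategy (G.induce {v}ᶜ) 1} (hS' : Catches S') :
    Catches (liftStrategy G v u huv S') := by
  intro r hr
  set S := liftStrategy G v u huv S' with hS
  by_cases hcap : ∃ n, Step G (copSeq S r n 0) (r n)
  · obtain ⟨n, hn⟩ := hcap
    refine ⟨n, ?_⟩
    show S.move (copSeq S r n) (r n) 0 = r n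
    rw [hS, liftStrategy_move huv, if_pos hn]
  · push_neg at hcap
    set pr : ℕ → ({v}ᶜ : Set V) := fun n => piMap G v u huv (r n) with hpr
    have hwalk : ∀ n, Step (G.induce {v}ᶜ) (pr n) (pr (n + 1)) :=
      fun n => step_piMap huv hdom (hr n)
    have hconst : ∀ {α : Type _} (f : Fin 1 → α), (fun _ : Fin 1 => f 0) = f :=
      fun f => funext fun i => by rw [Subsingleton.elim i 0]
    have key : ∀ n, copSeq S r n = fun _ => ↑(copSeq S' pr n 0) := by
      intro n
      induction n with
      | zero =>
        show S.init = _
        rw [hS, liftStrategy_init huv]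
        rfl
      | succ n ih =>
        have hnev : copSeq S r n 0 ≠ v := by
          rw [ih]
          exact (copSeq S' pr n 0).2
        show S.move (copSeq S r n) (r n) = _
        rw [hS, liftStrategy_move huv, if_neg (hcap n), if_neg hnev]
        have hpi : piMap G v u huv (copSeq S r n 0) = copSeq S' pr n 0 := by
          rw [ih]
          exact piMap_coe huv _
        have harg : (fun _ : Fin 1 => piMap G v u huv (copSeq S r n 0)) = copSeq S' pr n := by
          simp only [hpi]
          exact hconst _
        funext j
        show (↑(S'.move (fun _ => piMap G v u huv (copSeq S r n 0))
          (piMap G v u huv (r n)) 0) : V) = ↑(copSeq S' pr (n + 1) 0)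
        rw [harg]
        rfl
    obtain ⟨n, hn⟩ := hS' pr hwalk
    exfalso
    apply hcap (n + 1)
    have hcpos : copSeq S r (n + 1) 0 = ↑(pr n) := by
      rw [key (n + 1)]
      exact congrArg _ hn
    rw [hcpos]
    by_cases hv : r n = v
    · have hu : (↑(pr n) : V) = u := by
        show (↑(piMap G v u huv (r n)) : V) = u
        rw [piMap_eq_of_eq huv hv]
      rw [hu]
      exact hdom (r (n + 1)) (hv ▸ hr n)
    · have hrn : (↑(pr n) : V) = r n := by
        show (↑(piMap G v u huv (r n)) : V) = r n
        rw [piMap_eq_of_ne huv hv]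
      rw [hrn]
      exact hr n

lemma exists_catches (N : ℕ) : ∀ (W : Type u_1) [Fintype W] (G : SimpleGraph W),
    Fintype.card W ≤ N → G.Connected →
    (∀ n, 4 ≤ n → IsEmpty (cycleGraph n ↪g G)) →
    ∃ S : CopStrategy G 1, Catches S := by
  induction N with
  | zero =>
    intro W _ G hcard hconn _
    haveI := hconn.nonempty
    have := Fintype.card_pos (α := W)
    omega
  | succ N ih =>
    intro W _ G hcard hconn hch
    haveI := hconn.nonempty
    classical
    by_cases hss : Subsingleton W
    · refine ⟨⟨fun _ => Classical.arbitrary W, fun _ r _ => r, ?_⟩, ?_⟩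
      · intro c r i
        exact Or.inl (Subsingleton.elim _ _)
      · intro r hr
        exact ⟨0, rfl⟩
    · haveI : Nontrivial W := not_subsingleton_iff_nontrivial.mp hss
      obtain ⟨u, v, hvu, hdom⟩ := exists_dominated G hconn hch
      have huv : u ≠ v := hvu.symm
      have hcard' : Fintype.card ({v}ᶜ : Set W) ≤ N := by
        have hlt : Fintype.card ({v}ᶜ : Set W) < Fintype.card W := by
          apply Fintype.card_subtype_lt (x := v)
          simp
        omega
      have hconn' : (G.induce ({v}ᶜ : Set W)).Connected := by
        haveI : Nonempty ↥({v}ᶜ : Set W) := ⟨⟨u, by simpa using huv⟩⟩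
        refine ⟨fun x y => ?_⟩
        have h := reachable_piMap huv hdom (hconn.preconnected ↑x ↑y)
        rwa [piMap_coe huv, piMap_coe huv] at h
      have hch' : ∀ n, 4 ≤ n → IsEmpty (cycleGraph n ↪g G.induce ({v}ᶜ : Set W)) :=
        fun n hn => ⟨fun f => (hch n hn).false (f.trans (Embedding.induce _))⟩
      obtain ⟨S', hS'⟩ := ih ({v}ᶜ : Set W) (G.induce _) hcard' hconn' hch'
      exact ⟨liftStrategy G v u huv S', liftStrategy_catches huv hdom hS'⟩

end Aux

/-- Every finite connected chordal graph has cop number 1. -/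
theorem copNumber_eq_one_of_chordal [Fintype V] (G : SimpleGraph V)
    (hconn : G.Connected)
    (hchordal : ∀ n, 4 ≤ n → IsEmpty (cycleGraph n ↪g G)) :
    copNumber G = 1 := by
  classical
  haveI : Nonempty V := hconn.nonempty
  have h1 : (1 : ℕ) ∈ {k | ∃ S : CopStrategy G k, CopsWin S} := by
    obtain ⟨S, hS⟩ := exists_catches (Fintype.card V) V G le_rfl hconn hchordal
    exact ⟨S, copsWin_of_catches hS⟩
  have h0 : (0 : ℕ) ∉ {k | ∃ S : CopStrategy G k, CopsWin S} := by
    rintro ⟨S, hS⟩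
    obtain ⟨n, i, -⟩ := hS ⟨fun _ => Classical.arbitrary V, fun _ r => r, fun _ _ => Or.inl rfl⟩
    exact i.elim0
  refine le_antisymm (Nat.sInf_le h1) ?_
  rcases Nat.eq_zero_or_pos (sInf {k | ∃ S : CopStrategy G k, CopsWin S}) with h | h
  · exfalso
    rw [Nat.sInf_eq_zero] at h
    rcases h with h | h
    · exact h0 h
    · rw [h] at h1
      simpa using h1
  · exact h
end

section
/- If G is a finite simple connected graph containing no induced path on t vertices (t ≥ 2), then t − 2 cops have a strategy that captures the robber within t − 1 cop moves (for t ≥ 4; in general, max(1, t−2) cops suffice). -/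
open SimpleGraph

variable {V : Type*}

section Aux
variable (G : SimpleGraph V)

/-- Witness walk from `b` to `r`. -/
def WitF (b r : V) (B A : Set V) (m : ℕ) (f : ℕ → V) : Prop :=
  f 0 = b ∧ f m = r ∧ 1 ≤ m ∧ (∀ p, p < m → G.Adj (f p) (f (p+1))) ∧
    f 1 ∉ B ∧ ∀ p, 2 ≤ p → p ≤ m → f p ∉ A

/-- Strong witness: later vertices also avoid `N[f 1]`. -/
def SWit (b r : V) (B A : Set V) (m : ℕ) (f : ℕ → V) : Prop :=
  WitF G b r B A m f ∧ ∀ p, 3 ≤ p → p ≤ m → f p ∉ closedNbhd G (f 1)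

lemma exists_swit {b r : V} {B A : Set V} (hBA : B ⊆ A)
    (h : ∃ m f, WitF G b r B A m f) : ∃ m f, SWit G b r B A m f := by
  classical
  have h' : ∃ m, ∃ f, WitF G b r B A m f := h
  obtain ⟨f, hf0, hfr, hm1, hch, hB, hA⟩ := Nat.find_spec h'
  set M := Nat.find h' with hMdef
  refine ⟨M, f, ⟨hf0, hfr, hm1, hch, hB, hA⟩, ?_⟩
  intro p hp3 hpM hmem
  have hb1 : G.Adj b (f 1) := by
    have := hch 0 (by omega)
    rwa [hf0] at this
  rcases Set.mem_insert_iff.mp hmem with he | hadjp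
  · -- f p = f 1 : shorter witness of length M - p + 1
    have hw : ∃ g, WitF G b r B A (M - p + 1) g := by
      refine ⟨fun q => if q = 0 then b else f (q + p - 1), by simp, ?_, by omega, ?_, ?_, ?_⟩
      · have h1 : ¬ (M - p + 1 = 0) := by omega
        simp only [h1, if_false]
        have h2 : M - p + 1 + p - 1 = M := by omega
        rw [h2, hfr]
      · intro q hq
        rcases Nat.eq_zero_or_pos q with rfl | hq1
        · simp only [if_pos rfl, if_neg (by omega : ¬ (0 + 1 = 0))]
          have e1 : 0 + 1 + p - 1 = p := by omega
          rw [e1, he]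
          exact hb1
        · simp only [if_neg (by omega : ¬ q = 0), if_neg (by omega : ¬ (q + 1 = 0))]
          have e1 : q + 1 + p - 1 = (q + p - 1) + 1 := by omega
          rw [e1]
          exact hch (q + p - 1) (by omega)
      · simp only [if_neg one_ne_zero]
        have e1 : 1 + p - 1 = p := by omega
        rw [e1]
        exact fun hB' => hA p (by omega) hpM (hBA hB')
      · intro q hq2 hqle
        simp only [if_neg (by omega : ¬ q = 0)]
        exact hA (q + p - 1) (by omega) (by omega)
    exact absurd hw (Nat.find_min h' (by omega))
  · -- G.Adj (f 1) (f p) : shorter witness of length M - p + 2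
    have hadj1 : G.Adj (f 1) (f p) := hadjp
    have hw : ∃ g, WitF G b r B A (M - p + 2) g := by
      refine ⟨fun q => if q = 0 then b else if q = 1 then f 1 else f (q + p - 2),
        by simp, ?_, by omega, ?_, by simp [hB], ?_⟩
      · simp only [if_neg (by omega : ¬ (M - p + 2 = 0)), if_neg (by omega : ¬ (M - p + 2 = 1))]
        have h2 : M - p + 2 + p - 2 = M := by omega
        rw [h2, hfr]
      · intro q hq
        rcases Nat.eq_zero_or_pos q with rfl | hq1
        · simpa using hb1
        · rcases Nat.eq_or_lt_of_le hq1 with rfl | hq2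
          · simp only [if_neg one_ne_zero, if_pos rfl, if_neg (by omega : ¬ (1 + 1 = 0)),
              if_neg (by omega : ¬ (1 + 1 = 1))]
            have e1 : 1 + 1 + p - 2 = p := by omega
            rw [e1]
            exact hadj1
          · simp only [if_neg (by omega : ¬ q = 0), if_neg (by omega : ¬ q = 1),
              if_neg (by omega : ¬ (q + 1 = 0)), if_neg (by omega : ¬ (q + 1 = 1))]
            have e1 : q + 1 + p - 2 = (q + p - 2) + 1 := by omega
            rw [e1]
            exact hch (q + p - 2) (by omega)
      · intro q hq2 hqle
        simp only [if_neg (by omega : ¬ q = 0), if_neg (by omega : ¬ q = 1)]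
        exact hA (q + p - 2) (by omega) (by omega)
    exact absurd hw (Nat.find_min h' (by omega))

lemma exists_wit_init (hconn : G.Connected) (v₀ r : V) (hr : r ∉ closedNbhd G v₀) :
    ∃ m f, WitF G v₀ r (∅ : Set V) (closedNbhd G v₀) m f := by
  classical
  have h : ∃ m, ∃ f : ℕ → V, f 0 = v₀ ∧ f m = r ∧ ∀ p, p < m → G.Adj (f p) (f (p+1)) := by
    obtain ⟨w⟩ := hconn v₀ r
    exact ⟨w.length, w.getVert, w.getVert_zero, w.getVert_length,
      fun p hp => w.adj_getVert_succ hp⟩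
  obtain ⟨f, hf0, hfr, hch⟩ := Nat.find_spec h
  set M := Nat.find h with hMdef
  have hrne : r ≠ v₀ := fun e => hr (by rw [e]; exact Set.mem_insert _ _)
  have hM1 : 1 ≤ M := by
    rcases Nat.eq_zero_or_pos M with h0 | h1
    · exact absurd (by rw [← hfr, h0, hf0]) hrne
    · exact h1
  refine ⟨M, f, hf0, hfr, hM1, hch, by simp, ?_⟩
  intro p hp2 hpM hmem
  rcases Set.mem_insert_iff.mp hmem with he | hadjp
  · -- f p = v₀ : suffix witness of length M - p
    have hw : ∃ g : ℕ → V, g 0 = v₀ ∧ g (M - p) = r ∧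
        ∀ q, q < M - p → G.Adj (g q) (g (q+1)) := by
      refine ⟨fun q => f (q + p), by simpa using he, ?_, ?_⟩
      · show f (M - p + p) = r
        have e1 : M - p + p = M := by omega
        rw [e1, hfr]
      · intro q hq
        show G.Adj (f (q + p)) (f (q + 1 + p))
        have e1 : q + 1 + p = (q + p) + 1 := by omega
        rw [e1]
        exact hch (q + p) (by omega)
    exact absurd hw (Nat.find_min h (by omega))
  · -- G.Adj v₀ (f p)
    have hadj1 : G.Adj v₀ (f p) := hadjp
    have hw : ∃ g : ℕ → V, g 0 = v₀ ∧ g (M - p + 1) = r ∧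
        ∀ q, q < M - p + 1 → G.Adj (g q) (g (q+1)) := by
      refine ⟨fun q => if q = 0 then v₀ else f (q + p - 1), by simp, ?_, ?_⟩
      · simp only [if_neg (by omega : ¬ (M - p + 1 = 0))]
        have e1 : M - p + 1 + p - 1 = M := by omega
        rw [e1, hfr]
      · intro q hq
        rcases Nat.eq_zero_or_pos q with rfl | hq1
        · simp only [if_pos rfl, if_neg (by omega : ¬ (0 + 1 = 0))]
          have e1 : 0 + 1 + p - 1 = p := by omega
          rw [e1]
          exact hadj1
        · simp only [if_neg (by omega : ¬ q = 0), if_neg (by omega : ¬ (q + 1 = 0))]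
          have e1 : q + 1 + p - 1 = (q + p - 1) + 1 := by omega
          rw [e1]
          exact hch (q + p - 1) (by omega)
    exact absurd hw (Nat.find_min h (by omega))
open scoped Classical in
noncomputable def theMove (k : ℕ) (c : Fin (k+1) → V) (r : V) : Fin (k+1) → V :=
  if hcap : ∃ i, r ∈ closedNbhd G (c i) then Function.update c hcap.choose r
  else if hw : ∃ m f, SWit G (c (Fin.last k)) r
      (⋃ i ∈ {i : Fin (k+1) | c i ≠ c (Fin.last k)}, closedNbhd G (c i))
      (⋃ i, closedNbhd G (c i)) m f then
    fun i => if (∃ i' : Fin (k+1), i' < i ∧ c i' = c i) ∧ c i = c (Fin.last k)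
      then hw.choose_spec.choose 1 else c i
  else c

lemma theMove_valid (k : ℕ) (c : Fin (k+1) → V) (r : V) (i : Fin (k+1)) :
    Step G (c i) (theMove G k c r i) := by
  classical
  unfold theMove
  split_ifs with h1 h2 h3
  · by_cases hi : i = h1.choose
    · subst hi
      rw [Function.update_self]
      rcases Set.mem_insert_iff.mp h1.choose_spec with h | h
      · exact Or.inl h.symm
      · exact Or.inr h
    · rw [Function.update_of_ne hi]
      exact Or.inl rfl
  · dsimp only
    split_ifs with h3
    · refine Or.inr ?_
      obtain ⟨⟨hf0, _, hm1, hch, _, _⟩, _⟩ := h2.choose_spec.choose_spec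
      have := hch 0 (by omega)
      rw [hf0] at this
      rw [h3.2]
      simpa using this
    · exact Or.inl rfl
  · exact Or.inl rfl

lemma theMove_capture (k : ℕ) (c : Fin (k+1) → V) (r : V)
    (h : ∃ i, r ∈ closedNbhd G (c i)) : ∃ i, theMove G k c r i = r := by
  classical
  unfold theMove
  rw [dif_pos h]
  exact ⟨h.choose, Function.update_self _ _ _⟩

lemma embedding_of_inducedPath (n : ℕ) (w : ℕ → V)
    (hadj : ∀ p, p + 1 < n → G.Adj (w p) (w (p+1)))
    (hnon : ∀ p q, q < n → p + 1 < q → w q ∉ closedNbhd G (w p)) :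
    Nonempty (pathGraph n ↪g G) := by
  have hne : ∀ p q, p < q → q < n → w p ≠ w q := by
    intro p q hpq hq
    rcases eq_or_lt_of_le (Nat.succ_le_of_lt hpq) with h | h
    · subst h
      exact (hadj p (by omega)).ne
    · intro e
      exact hnon p q hq h (by rw [← e]; exact Set.mem_insert _ _)
  refine ⟨⟨⟨fun i => w i, ?_⟩, ?_⟩⟩
  · intro a b hab
    by_contra hab'
    rcases Ne.lt_or_gt (fun e : a = b => hab' e) with h | h
    · exact hne a b (by exact_mod_cast h) b.isLt hab
    · exact hne b a (by exact_mod_cast h) a.isLt hab.symm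
  · intro a b
    change G.Adj (w a) (w b) ↔ _
    rw [pathGraph_adj]
    constructor
    · intro h
      by_contra hc
      push_neg at hc
      rcases lt_trichotomy (a : ℕ) (b : ℕ) with hab | hab | hab
      · have h1 : (a : ℕ) + 1 < b := lt_of_le_of_ne hab hc.1
        exact hnon a b b.isLt h1 (Set.mem_insert_iff.mpr (Or.inr h))
      · exact G.loopless.irrefl _ (by rwa [show (a : Fin n) = b from Fin.ext hab] at h)
      · have h1 : (b : ℕ) + 1 < a := lt_of_le_of_ne hab hc.2
        exact hnon b a a.isLt h1 (Set.mem_insert_iff.mpr (Or.inr h.symm))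
    · rintro (h | h)
      · have := hadj a (by omega)
        rwa [h] at this
      · have := hadj b (by omega)
        rw [h] at this
        exact this.symm

/-- The invariant after `n` extension rounds. -/
def GoodInv (k : ℕ) (c : Fin (k+1) → V) (r : V) (n : ℕ) : Prop :=
  ∃ v : ℕ → V,
    (∀ i : Fin (k+1), c i = v (min (i : ℕ) n)) ∧
    (∀ p, p < n → G.Adj (v p) (v (p+1))) ∧
    (∀ p q, q ≤ n → p + 1 < q → v q ∉ closedNbhd G (v p)) ∧
    (∀ i : Fin (k+1), r ∉ closedNbhd G (c i)) ∧
    (∃ m f, WitF G (v n) r (⋃ q, ⋃ (_ : q < n), closedNbhd G (v q))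
        (⋃ q, ⋃ (_ : q ≤ n), closedNbhd G (v q)) m f)

lemma goodInv_zero {k : ℕ} (hconn : G.Connected) (v₀ r : V)
    (hr : ∀ i : Fin (k+1), r ∉ closedNbhd G v₀) :
    GoodInv G k (fun _ => v₀) r 0 := by
  have hB : (⋃ q, ⋃ (_ : q < 0), closedNbhd G ((fun _ : ℕ => v₀) q)) = (∅ : Set V) := by
    simp
  have hA : (⋃ q, ⋃ (_ : q ≤ 0), closedNbhd G ((fun _ : ℕ => v₀) q)) = closedNbhd G v₀ := by
    ext x
    simp
  refine ⟨fun _ => v₀, fun i => by simp, by omega, by omega, hr, ?_⟩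
  rw [hB, hA]
  exact exists_wit_init G hconn v₀ r (hr 0)

lemma goodInv_final {k : ℕ} (c : Fin (k+1) → V) (r : V) (hInv : GoodInv G k c r k) :
    Nonempty (pathGraph (k+3) ↪g G) := by
  obtain ⟨v, hpat, hadj, hnon, hsafe, m, f, hf0, hfr, hm1, hch, hB, hA⟩ := hInv
  have hlast : c (Fin.last k) = v k := by
    have := hpat (Fin.last k)
    simpa using this
  have hB' : ∀ q, q < k → f 1 ∉ closedNbhd G (v q) := by
    intro q hq hmem
    exact hB (Set.mem_iUnion.mpr ⟨q, Set.mem_iUnion.mpr ⟨hq, hmem⟩⟩)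
  have hA' : ∀ p, 2 ≤ p → p ≤ m → ∀ q, q ≤ k → f p ∉ closedNbhd G (v q) := by
    intro p h1 h2 q hq hmem
    exact hA p h1 h2 (Set.mem_iUnion.mpr ⟨q, Set.mem_iUnion.mpr ⟨hq, hmem⟩⟩)
  have hm2 : 2 ≤ m := by
    by_contra hm
    have hm1' : m = 1 := by omega
    subst hm1'
    apply hsafe (Fin.last k)
    have hmem : f 1 ∈ closedNbhd G (f 0) :=
      Set.mem_insert_iff.mpr (Or.inr (hch 0 (by omega)))
    rw [hfr] at hmem
    rw [hlast, ← hf0]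
    exact hmem
  set w : ℕ → V := fun p => if p ≤ k then v p else if p = k+1 then f 1 else f 2 with hw
  have hw1 : ∀ p, p ≤ k → w p = v p := fun p hp => if_pos hp
  have hw2 : w (k+1) = f 1 := by
    rw [hw]
    dsimp only
    rw [if_neg (by omega), if_pos rfl]
  have hw3 : w (k+2) = f 2 := by
    rw [hw]
    dsimp only
    rw [if_neg (by omega), if_neg (by omega)]
  refine embedding_of_inducedPath G (k+3) w ?_ ?_
  · intro p hp
    rcases lt_trichotomy p k with h | h | h
    · rw [hw1 p (by omega), hw1 (p+1) (by omega)]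
      exact hadj p h
    · subst h
      rw [hw1 p le_rfl, hw2, ← hf0]
      exact hch 0 (by omega)
    · have hp1 : p = k + 1 := by omega
      subst hp1
      rw [hw2, hw3]
      exact hch 1 (by omega)
  · intro p q hq hpq
    rcases lt_trichotomy q (k+1) with h | h | h
    · rw [hw1 q (by omega), hw1 p (by omega)]
      exact hnon p q (by omega) hpq
    · subst h
      rw [hw2, hw1 p (by omega)]
      exact hB' p (by omega)
    · have hq1 : q = k + 2 := by omega
      subst hq1
      rw [hw3, hw1 p (by omega)]
      exact hA' 2 le_rfl hm2 p (by omega)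
lemma goodInv_step {k n : ℕ} (c : Fin (k+1) → V) (r r' : V) (hn : n + 1 ≤ k)
    (hInv : GoodInv G k c r n) (hr' : Step G r r') :
    (∃ i, r' ∈ closedNbhd G (theMove G k c r i)) ∨ GoodInv G k (theMove G k c r) r' (n+1) := by
  classical
  obtain ⟨v, hpat, hadj, hnon, hsafe, hQ⟩ := hInv
  have vne : ∀ p q, p < q → q ≤ n → v p ≠ v q := by
    intro p q hpq hqn
    rcases eq_or_lt_of_le (Nat.succ_le_of_lt hpq) with h | h
    · subst h
      exact (hadj p (by omega)).ne
    · intro e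
      exact hnon p q hqn h (by rw [← e]; exact Set.mem_insert _ _)
  have hpatv : ∀ q (hq : q ≤ n), c ⟨q, by omega⟩ = v q := by
    intro q hq
    have h := hpat ⟨q, by omega⟩
    rwa [min_eq_left hq] at h
  have hlast : c (Fin.last k) = v n := by
    have h := hpat (Fin.last k)
    rwa [Fin.val_last, min_eq_right (by omega : n ≤ k)] at h
  have hnocap : ¬ ∃ i, r ∈ closedNbhd G (c i) := by
    rintro ⟨i, hi⟩
    exact hsafe i hi
  have hBeq : (⋃ i ∈ {i : Fin (k+1) | c i ≠ c (Fin.last k)}, closedNbhd G (c i))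
      = ⋃ q, ⋃ (_ : q < n), closedNbhd G (v q) := by
    ext x
    simp only [Set.mem_iUnion, Set.mem_setOf_eq, exists_prop]
    constructor
    · rintro ⟨i, hne, hx⟩
      refine ⟨min (i : ℕ) n, ?_, ?_⟩
      · rcases eq_or_lt_of_le (min_le_right (i : ℕ) n) with h | h
        · exact absurd (by rw [hpat i, hlast, h]) hne
        · exact h
      · rwa [hpat i] at hx
    · rintro ⟨q, hq, hx⟩
      refine ⟨⟨q, by omega⟩, ?_, ?_⟩
      · rw [hpatv q (by omega), hlast]
        exact vne q n hq le_rfl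
      · rwa [hpatv q (by omega)]
  have hAeq : (⋃ i, closedNbhd G (c i)) = ⋃ q, ⋃ (_ : q ≤ n), closedNbhd G (v q) := by
    ext x
    simp only [Set.mem_iUnion, exists_prop]
    constructor
    · rintro ⟨i, hx⟩
      exact ⟨min (i : ℕ) n, min_le_right _ _, by rwa [hpat i] at hx⟩
    · rintro ⟨q, hq, hx⟩
      exact ⟨⟨q, by omega⟩, by rwa [hpatv q hq]⟩
  have hw : ∃ m f, SWit G (c (Fin.last k)) r
      (⋃ i ∈ {i : Fin (k+1) | c i ≠ c (Fin.last k)}, closedNbhd G (c i))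
      (⋃ i, closedNbhd G (c i)) m f := by
    rw [hBeq, hAeq, hlast]
    refine exists_swit G ?_ hQ
    intro x hx
    simp only [Set.mem_iUnion, exists_prop] at hx ⊢
    obtain ⟨q, hq, hx⟩ := hx
    exact ⟨q, by omega, hx⟩
  have hmove : theMove G k c r = fun i =>
      if (∃ i' : Fin (k+1), i' < i ∧ c i' = c i) ∧ c i = c (Fin.last k)
      then hw.choose_spec.choose 1 else c i := by
    unfold theMove
    rw [dif_neg hnocap, dif_pos hw]
  have hprops := hw.choose_spec.choose_spec
  generalize hfdef : hw.choose_spec.choose = f at hmove hprops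
  generalize hmdef : hw.choose = m at hprops
  obtain ⟨⟨hf0, hfr, hm1, hch, hB, hA⟩, hstrong⟩ := hprops
  have hf0' : f 0 = v n := by rw [hf0, hlast]
  have hB' : ∀ q, q < n → f 1 ∉ closedNbhd G (v q) := by
    intro q hq hmem
    rw [hBeq] at hB
    exact hB (Set.mem_iUnion.mpr ⟨q, Set.mem_iUnion.mpr ⟨hq, hmem⟩⟩)
  have hA' : ∀ p, 2 ≤ p → p ≤ m → ∀ q, q ≤ n → f p ∉ closedNbhd G (v q) := by
    intro p h1 h2 q hq hmem
    rw [hAeq] at hA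
    exact hA p h1 h2 (Set.mem_iUnion.mpr ⟨q, Set.mem_iUnion.mpr ⟨hq, hmem⟩⟩)
  set v' : ℕ → V := fun p => if p ≤ n then v p else f 1 with hv'
  have hv'le : ∀ p, p ≤ n → v' p = v p := fun p hp => if_pos hp
  have hv'succ : v' (n+1) = f 1 := if_neg (by omega)
  have hpat' : ∀ i : Fin (k+1), theMove G k c r i = v' (min (i : ℕ) (n+1)) := by
    intro i
    rw [hmove]
    dsimp only
    rcases lt_trichotomy (i : ℕ) n with h | h | h
    · have hci : c i = v (i : ℕ) := by rw [hpat i, min_eq_left (by omega)]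
      have hcond : ¬ ((∃ i' : Fin (k+1), i' < i ∧ c i' = c i) ∧ c i = c (Fin.last k)) := by
        rintro ⟨-, hc2⟩
        rw [hci, hlast] at hc2
        exact vne _ _ h le_rfl hc2
      rw [if_neg hcond, min_eq_left (by omega), hv'le _ (by omega), hci]
    · have hci : c i = v n := by rw [hpat i, h, min_self]
      have hcond : ¬ ((∃ i' : Fin (k+1), i' < i ∧ c i' = c i) ∧ c i = c (Fin.last k)) := by
        rintro ⟨⟨i', hi', hci'⟩, -⟩
        have hi'n : (i' : ℕ) < n := by
          have := Fin.lt_def.mp hi'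
          omega
        have hci'' : c i' = v (i' : ℕ) := by rw [hpat i', min_eq_left (by omega)]
        rw [hci'', hci] at hci'
        exact vne _ _ hi'n le_rfl hci'
      rw [if_neg hcond, min_eq_left (by omega), hv'le _ (by omega), hci, h]
    · have hci : c i = v n := by rw [hpat i, min_eq_right (by omega)]
      have hcond : (∃ i' : Fin (k+1), i' < i ∧ c i' = c i) ∧ c i = c (Fin.last k) := by
        constructor
        · refine ⟨⟨n, by omega⟩, Fin.lt_def.mpr (by simpa using h), ?_⟩
          rw [hpatv n le_rfl, hci]
        · rw [hci, hlast]
      rw [if_pos hcond, min_eq_right (by omega), hv'succ]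
  have hadj' : ∀ p, p < n + 1 → G.Adj (v' p) (v' (p+1)) := by
    intro p hp
    rcases lt_or_eq_of_le (by omega : p ≤ n) with h | h
    · rw [hv'le p (by omega), hv'le (p+1) (by omega)]
      exact hadj p h
    · subst h
      rw [hv'le p le_rfl, hv'succ]
      have h2 := hch 0 (by omega)
      rwa [hf0'] at h2
  have hnon' : ∀ p q, q ≤ n + 1 → p + 1 < q → v' q ∉ closedNbhd G (v' p) := by
    intro p q hq hpq
    rcases lt_or_eq_of_le hq with h | h
    · rw [hv'le q (by omega), hv'le p (by omega)]
      exact hnon p q (by omega) hpq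
    · subst h
      rw [hv'succ, hv'le p (by omega)]
      exact hB' p (by omega)
  by_cases hcap' : ∃ i, r' ∈ closedNbhd G (theMove G k c r i)
  · exact Or.inl hcap'
  push_neg at hcap'
  right
  have hm2 : 2 ≤ m := by
    by_contra hm'
    have hme : m = 1 := by omega
    apply hcap' (Fin.last k)
    have hlastmv : theMove G k c r (Fin.last k) = f 1 := by
      rw [hpat' (Fin.last k), Fin.val_last, min_eq_right (by omega), hv'succ]
    rw [hlastmv]
    have hfr1 : f 1 = r := by rw [← hfr, hme]
    rw [hfr1]
    rcases hr' with h | h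
    · rw [← h]
      exact Set.mem_insert _ _
    · exact Set.mem_insert_iff.mpr (Or.inr h)
  have hr'A : ∀ q, q ≤ n + 1 → r' ∉ closedNbhd G (v' q) := by
    intro q hq hmem
    apply hcap' ⟨q, by omega⟩
    rw [hpat' ⟨q, by omega⟩]
    show r' ∈ closedNbhd G (v' (min q (n+1)))
    rw [min_eq_left hq]
    exact hmem
  have hBmem : ∀ x : V, (∀ q, q ≤ n → x ∉ closedNbhd G (v q)) →
      x ∉ ⋃ q, ⋃ (_ : q < n + 1), closedNbhd G (v' q) := by
    intro x hx hmem
    simp only [Set.mem_iUnion] at hmem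
    obtain ⟨q, hq, hm'⟩ := hmem
    rw [hv'le q (by omega)] at hm'
    exact hx q (by omega) hm'
  have hAmem : ∀ x : V, (∀ q, q ≤ n → x ∉ closedNbhd G (v q)) → x ∉ closedNbhd G (f 1) →
      x ∉ ⋃ q, ⋃ (_ : q ≤ n + 1), closedNbhd G (v' q) := by
    intro x hx hx1 hmem
    simp only [Set.mem_iUnion] at hmem
    obtain ⟨q, hq, hm'⟩ := hmem
    rcases eq_or_lt_of_le hq with h | h
    · rw [h, hv'succ] at hm'
      exact hx1 hm'
    · rw [hv'le q (by omega)] at hm'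
      exact hx q (by omega) hm'
  set g : ℕ → V := fun q => if q = 0 then f 1 else f (q+1) with hg
  have hgval : ∀ q, 1 ≤ q → g q = f (q+1) := fun q hq => if_neg (by omega)
  have hg0 : g 0 = f 1 := if_pos rfl
  have hgch : ∀ q, q < m - 1 → G.Adj (g q) (g (q+1)) := by
    intro q hq
    rcases Nat.eq_zero_or_pos q with rfl | h1
    · rw [hg0, hgval 1 le_rfl]
      exact hch 1 (by omega)
    · rw [hgval q h1, hgval (q+1) (by omega)]
      exact hch (q+1) (by omega)
  have hgend : g (m-1) = r := by
    rw [hgval (m-1) (by omega)]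
    have e : m - 1 + 1 = m := by omega
    rw [e, hfr]
  have hghead : g 1 ∉ ⋃ q, ⋃ (_ : q < n + 1), closedNbhd G (v' q) := by
    rw [hgval 1 le_rfl]
    exact hBmem _ (fun q hq => hA' 2 le_rfl hm2 q hq)
  have hgtail : ∀ p, 2 ≤ p → p ≤ m - 1 →
      g p ∉ ⋃ q, ⋃ (_ : q ≤ n + 1), closedNbhd G (v' q) := by
    intro p h1 h2
    rw [hgval p (by omega)]
    exact hAmem _ (fun q hq => hA' (p+1) (by omega) (by omega) q hq)
      (hstrong (p+1) (by omega) (by omega))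
  have hr'A' : r' ∉ ⋃ q, ⋃ (_ : q ≤ n + 1), closedNbhd G (v' q) := by
    intro hmem
    simp only [Set.mem_iUnion] at hmem
    obtain ⟨q, hq, hm'⟩ := hmem
    exact hr'A q hq hm'
  refine ⟨v', hpat', hadj', hnon', hcap', ?_⟩
  rcases hr' with heq | hadjr
  · -- robber stays
    refine ⟨m - 1, g, by rw [hg0, hv'succ], by rw [hgend, heq], by omega, hgch, hghead, hgtail⟩
  · -- robber moves along an edge
    set g2 : ℕ → V := fun q => if q ≤ m - 1 then g q else r' with hg2def
    have hg2a : ∀ q, q ≤ m - 1 → g2 q = g q := fun q hq => if_pos hq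
    have hg2b : g2 m = r' := if_neg (by omega)
    refine ⟨m, g2, ?_, hg2b, by omega, ?_, ?_, ?_⟩
    · rw [hg2a 0 (by omega), hg0, hv'succ]
    · intro q hq
      rcases lt_or_eq_of_le (by omega : q ≤ m - 1) with h | h
      · rw [hg2a q (by omega), hg2a (q+1) (by omega)]
        exact hgch q h
      · have e : q + 1 = m := by omega
        rw [hg2a q (by omega), e, hg2b, h, hgend]
        exact hadjr
    · rw [hg2a 1 (by omega)]
      exact hghead
    · intro p h1 h2
      rcases lt_or_eq_of_le h2 with h | h
      · rw [hg2a p (by omega)]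
        exact hgtail p h1 (by omega)
      · subst h
        rw [hg2b]
        exact hr'A'
end Aux

/-- If `G` is a finite simple connected `P_t`-free graph (`t ≥ 2`), then
`max 1 (t - 2)` cops have a strategy that captures the robber within `t - 1` cop moves. -/
theorem cops_capture_fast_of_pathFree [Fintype V] (G : SimpleGraph V)
    (hconn : G.Connected) (t : ℕ) (ht : 2 ≤ t)
    (hfree : IsEmpty (pathGraph t ↪g G)) :
    ∃ S : CopStrategy G (max 1 (t - 2)), CapturesWithin S (t - 1) := by
  classical
  have hne : Nonempty V := hconn.nonempty
  rcases eq_or_lt_of_le ht with ht2 | ht3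
  · -- `t = 2`: the graph has no edges, so it is a single vertex
    have hnoadj : ∀ u w : V, ¬ G.Adj u w := by
      intro u w huw
      apply hfree.false
      rw [← ht2]
      refine ⟨⟨![u, w], ?_⟩, ?_⟩
      · intro a b hab
        fin_cases a <;> fin_cases b <;> simp_all <;>
          first
            | rfl
            | exact absurd hab huw.ne
            | exact absurd hab.symm huw.ne
      · intro a b
        change G.Adj (![u, w] a) (![u, w] b) ↔ _
        rw [pathGraph_two_eq_top]
        fin_cases a <;> fin_cases b <;>
          simp [huw, huw.symm, G.irrefl, huw.ne, huw.ne']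
    have hsub : Subsingleton V := by
      constructor
      intro a b
      obtain ⟨w⟩ := hconn a b
      cases w with
      | nil => rfl
      | cons h _ => exact absurd h (hnoadj _ _)
    refine ⟨⟨fun _ => hne.some, fun c _ => c, fun c r i => Or.inl rfl⟩, ?_⟩
    intro R
    refine ⟨0, by omega, ⟨0, by omega⟩, Subsingleton.elim _ _⟩
  · -- `3 ≤ t`
    obtain ⟨k, hk⟩ : ∃ k, max 1 (t - 2) = k + 1 := ⟨t - 3, by omega⟩
    have htk : t = k + 3 := by omega
    rw [hk]
    refine ⟨⟨fun _ => hne.some, theMove G k, fun c r i => theMove_valid G k c r i⟩, ?_⟩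
    set S : CopStrategy G (k+1) :=
      ⟨fun _ => hne.some, theMove G k, fun c r i => theMove_valid G k c r i⟩ with hS
    intro R
    have key : ∀ n, n ≤ k →
        (∃ n', n' ≤ n ∧ ∃ i, S.move (play S R n').1 (play S R n').2 i = (play S R n').2)
        ∨ GoodInv G k (play S R n).1 (play S R n).2 n := by
      intro n
      induction n with
      | zero =>
        intro _
        by_cases h0 : ∃ i : Fin (k+1), (play S R 0).2 ∈ closedNbhd G ((play S R 0).1 i)
        · exact Or.inl ⟨0, le_rfl, theMove_capture G k _ _ h0⟩
        · push_neg at h0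
          exact Or.inr (goodInv_zero G hconn hne.some _ (fun i => h0 i))
      | succ n ih =>
        intro hn1
        rcases ih (by omega) with ⟨n', hn', hcap⟩ | hInv
        · exact Or.inl ⟨n', by omega, hcap⟩
        · have hstep := goodInv_step G (play S R n).1 (play S R n).2
            (R.move (S.move (play S R n).1 (play S R n).2) (play S R n).2) hn1 hInv
            (R.move_valid _ _)
          rcases hstep with hcap | hInv'
          · exact Or.inl ⟨n+1, le_rfl, theMove_capture G k _ _ hcap⟩
          · exact Or.inr hInv'
    rcases key k le_rfl with ⟨n', hn', hcap⟩ | hInv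
    · exact ⟨n', by omega, hcap⟩
    · exfalso
      obtain ⟨emb⟩ := goodInv_final G _ _ hInv
      rw [htk] at hfree
      exact hfree.false emb
end

section
/- Let v_0, v_1, ..., v_m be an induced path in G and C_1 ⊇ C_2 ⊇ ... ⊇ C_m a nested sequence of connected vertex sets such that for each i, C_i is a connected component of G[C_{i−1}] − N[v_{i−1}] (with C_0 = V(G) \ N[v_0] component convention), v_i ∉ C_i, and v_i has a neighbor in C_i. Then every vertex r' ∉ C_m that has a neighbor r ∈ C_m must be adjacent to some vertex v_i of the path. -/
open SimpleGraph

variable {V : Type*}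

/-- Gyárfás path attachment. Given an induced path `v 0, ..., v m` and a
nested sequence of connected sets where `C (i+1)` is a connected component of
`G[C i] − N[v i]` (with `C 0 = V(G)` convention), `v i ∉ C i` and `v i` has a neighbor in
`C i` (for `1 ≤ i ≤ m`), every vertex `r' ∉ C m` with a neighbor `r ∈ C m` is adjacent to
some vertex `v i` of the path. -/
theorem gyarfas_path_attach (G : SimpleGraph V) (m : ℕ) (v : ℕ → V) (C : ℕ → Set V)
    (hinj : ∀ i ≤ m, ∀ j ≤ m, v i = v j → i = j)
    (hpath : ∀ i ≤ m, ∀ j ≤ m, (G.Adj (v i) (v j) ↔ (i + 1 = j ∨ j + 1 = i)))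
    (hC0 : C 0 = Set.univ)
    (hnested : ∀ i < m, C (i + 1) ⊆ C i)
    (hdisj : ∀ i < m, ∀ x ∈ C (i + 1), x ∉ closedNbhd G (v i))
    (hCconn : ∀ i < m, (G.induce (C (i + 1))).Connected)
    (hcomp : ∀ i < m, ∀ x ∈ C (i + 1), ∀ y ∈ C i, G.Adj x y →
      y ∈ closedNbhd G (v i) ∨ y ∈ C (i + 1))
    (hnotin : ∀ i, 1 ≤ i → i ≤ m → v i ∉ C i)
    (hnbr : ∀ i, 1 ≤ i → i ≤ m → ∃ c ∈ C i, G.Adj (v i) c)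
    (r r' : V) (hr : r ∈ C m) (hr' : r' ∉ C m) (hadj : G.Adj r' r) :
    ∃ i ≤ m, G.Adj r' (v i) := by
  classical
  have hchain : ∀ a b : ℕ, a ≤ b → b ≤ m → C b ⊆ C a := by
    intro a b
    induction b with
    | zero =>
      intro hab _
      have : a = 0 := Nat.le_zero.mp hab
      subst this; exact subset_rfl
    | succ n ih =>
      intro hab hbm
      rcases Nat.eq_or_lt_of_le hab with h | h
      · subst h; exact subset_rfl
      · exact fun x hx => ih (by omega) (by omega) (hnested n (by omega) hx)
  have hex : ∃ j, r' ∉ C j := ⟨m, hr'⟩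
  have hjspec : r' ∉ C (Nat.find hex) := Nat.find_spec hex
  have hj0 : Nat.find hex ≠ 0 := by
    intro h; apply hjspec; rw [h, hC0]; trivial
  have hjm : Nat.find hex ≤ m := Nat.find_min' hex hr'
  set j := Nat.find hex with hjdef
  set i := j - 1 with hidef
  have him : i < m := by omega
  have hri : r' ∈ C i := by
    have := Nat.find_min hex (m := i) (by omega)
    exact not_not.mp this
  have hrCi1 : r ∈ C (i + 1) := hchain (i + 1) m (by omega) le_rfl hr
  have := hcomp i him r hrCi1 r' hri hadj.symm
  rcases this with hcn | hcc
  · rcases hcn with heq | hadj'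
    · exfalso
      apply hdisj i him r hrCi1
      rw [← heq]
      exact Or.inr hadj
    · exact ⟨i, by omega, (hadj' : G.Adj (v i) r').symm⟩
  · exfalso
    have : i + 1 = j := by omega
    rw [this] at hcc
    exact hjspec hcc
end
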